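/- Let f ∈ ℤ_p[[w]] be a nonzero power series with Weierstrass factorization f = p^μ · F(w) · u(w), where F is a distinguished (monic, degree λ, non-unit-coefficients divisible by p) polynomial and u a unit. Assume every zero of f in the open unit disc of ℂ_p has p-adic valuation at least r > 0. Then for every z ∈ ℂ_p with 0 < v_p(z) < r, one has v_p(f(z)) = μ + λ·v_p(z). -/

import Mathlib

open PowerSeries

set_option linter.unusedSectionVars false

namespace IwasawaAux

variable {p : ℕ} [Fact p.Prime]
variable {K : Type*} [NontriviallyNormedField K] [CompleteSpace K] [Algebra ℚ_[p] K]

/-- The canonical map `ℤ_[p] →+* K`. -/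
noncomputable def toK (p : ℕ) [Fact p.Prime] (K : Type*) [NontriviallyNormedField K]
    [Algebra ℚ_[p] K] : ℤ_[p] →+* K :=
  (algebraMap ℚ_[p] K).comp (PadicInt.Coe.ringHom)

theorem norm_toK (hnorm : ∀ x : ℚ_[p], ‖algebraMap ℚ_[p] K x‖ = ‖x‖) (a : ℤ_[p]) :
    ‖toK p K a‖ = ‖a‖ := by
  exact hnorm (a : ℚ_[p])

theorem summable_norm_aux (hnorm : ∀ x : ℚ_[p], ‖algebraMap ℚ_[p] K x‖ = ‖x‖)
    (g : PowerSeries ℤ_[p]) {z : K} (hz : ‖z‖ < 1) :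
    Summable fun n : ℕ => ‖toK p K (PowerSeries.coeff n g) * z ^ n‖ := by
  refine Summable.of_nonneg_of_le (fun n => norm_nonneg _) (fun n => ?_)
    (summable_geometric_of_lt_one (norm_nonneg z) hz)
  rw [norm_mul, norm_pow, norm_toK hnorm]
  exact mul_le_of_le_one_left (by positivity) (PadicInt.norm_le_one _)

theorem summable_aux (hnorm : ∀ x : ℚ_[p], ‖algebraMap ℚ_[p] K x‖ = ‖x‖)
    (g : PowerSeries ℤ_[p]) {z : K} (hz : ‖z‖ < 1) :
    Summable fun n : ℕ => toK p K (PowerSeries.coeff n g) * z ^ n :=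
  (summable_norm_aux hnorm g hz).of_norm

theorem eval_mul (hnorm : ∀ x : ℚ_[p], ‖algebraMap ℚ_[p] K x‖ = ‖x‖)
    (g h : PowerSeries ℤ_[p]) {z : K} (hz : ‖z‖ < 1) :
    (∑' n : ℕ, toK p K (PowerSeries.coeff n (g * h)) * z ^ n)
      = (∑' n : ℕ, toK p K (PowerSeries.coeff n g) * z ^ n)
        * (∑' n : ℕ, toK p K (PowerSeries.coeff n h) * z ^ n) := by
  rw [tsum_mul_tsum_eq_tsum_sum_antidiagonal_of_summable_norm
    (summable_norm_aux hnorm g hz) (summable_norm_aux hnorm h hz)]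
  refine tsum_congr fun n => ?_
  rw [PowerSeries.coeff_mul, map_sum, Finset.sum_mul]
  refine Finset.sum_congr rfl fun kl hkl => ?_
  replace hkl : kl.1 + kl.2 = n := by simpa using hkl
  rw [map_mul, ← hkl, pow_add]
  ring
theorem norm_tsum_le (hna : ∀ x y : K, ‖x + y‖ ≤ max ‖x‖ ‖y‖)
    {t : ℕ → K} (ht : Summable t) {C : ℝ} (hC : 0 ≤ C) (h : ∀ n, ‖t n‖ ≤ C) :
    ‖∑' n, t n‖ ≤ C := by
  haveI : IsUltrametricDist K :=
    IsUltrametricDist.isUltrametricDist_of_forall_norm_add_le_max_norm hna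
  have h1 : Filter.Tendsto (fun n => ‖∑ i ∈ Finset.range n, t i‖) Filter.atTop
      (nhds ‖∑' n, t n‖) := (ht.hasSum.tendsto_sum_nat).norm
  exact le_of_tendsto h1 (Filter.Eventually.of_forall fun n =>
    IsUltrametricDist.norm_sum_le_of_forall_le_of_nonneg hC fun i _ => h i)

theorem eval_poly (F : Polynomial ℤ_[p]) (z : K) :
    (∑' n : ℕ, toK p K (PowerSeries.coeff n (PowerSeries.mk fun n => F.coeff n)) * z ^ n)
      = (F.map (toK p K)).eval z := by
  rw [tsum_eq_sum (s := Finset.range (F.natDegree + 1)) ?side]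
  · rw [Polynomial.eval_eq_sum_range' (lt_of_le_of_lt Polynomial.natDegree_map_le
      (Nat.lt_succ_self _))]
    exact Finset.sum_congr rfl fun i _ => by rw [PowerSeries.coeff_mk, Polynomial.coeff_map]
  · intro n hn
    rw [Finset.mem_range, not_lt] at hn
    rw [PowerSeries.coeff_mk, Polynomial.coeff_eq_zero_of_natDegree_lt (by omega), map_zero,
      zero_mul]

theorem eval_pC (μ : ℕ) (z : K) :
    (∑' n : ℕ, toK p K (PowerSeries.coeff n ((p : PowerSeries ℤ_[p]) ^ μ)) * z ^ n)
      = (toK p K p) ^ μ := by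
  rw [tsum_eq_single 0 ?side]
  · have : ((p : PowerSeries ℤ_[p]) ^ μ) = PowerSeries.C ((p : ℤ_[p]) ^ μ) := by
      rw [map_pow, map_natCast]
    rw [this, PowerSeries.coeff_zero_C, map_pow, pow_zero, mul_one]
  · intro n hn
    have : ((p : PowerSeries ℤ_[p]) ^ μ) = PowerSeries.C ((p : ℤ_[p]) ^ μ) := by
      rw [map_pow, map_natCast]
    rw [this, PowerSeries.coeff_C, if_neg hn, map_zero, zero_mul]

theorem norm_eval_unit (hnorm : ∀ x : ℚ_[p], ‖algebraMap ℚ_[p] K x‖ = ‖x‖)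
    (hna : ∀ x y : K, ‖x + y‖ ≤ max ‖x‖ ‖y‖)
    (u : (PowerSeries ℤ_[p])ˣ) {z : K} (hz : ‖z‖ < 1) :
    ‖∑' n : ℕ, toK p K (PowerSeries.coeff n (u : PowerSeries ℤ_[p])) * z ^ n‖ = 1 := by
  haveI : IsUltrametricDist K :=
    IsUltrametricDist.isUltrametricDist_of_forall_norm_add_le_max_norm hna
  set t : ℕ → K := fun n => toK p K (PowerSeries.coeff n (u : PowerSeries ℤ_[p])) * z ^ n
    with ht
  have hsum : Summable t := summable_aux hnorm _ hz
  have h0 : ‖t 0‖ = 1 := by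
    have hu : IsUnit (PowerSeries.constantCoeff (u : PowerSeries ℤ_[p])) :=
      PowerSeries.isUnit_constantCoeff _ u.isUnit
    rw [ht]
    simp only [pow_zero, mul_one, PowerSeries.coeff_zero_eq_constantCoeff]
    rw [norm_toK hnorm]
    exact PadicInt.isUnit_iff.mp hu
  have htail : ‖∑' n : ℕ, t (n + 1)‖ ≤ ‖z‖ := by
    refine norm_tsum_le hna ((summable_nat_add_iff 1).2 hsum) (norm_nonneg z) fun n => ?_
    rw [ht]
    simp only [norm_mul, norm_pow]
    calc ‖toK p K (PowerSeries.coeff (n+1) (u : PowerSeries ℤ_[p]))‖ * ‖z‖ ^ (n+1)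
        ≤ 1 * ‖z‖ ^ (n+1) := by
          refine mul_le_mul_of_nonneg_right ?_ (by positivity)
          rw [norm_toK hnorm]; exact PadicInt.norm_le_one _
      _ ≤ ‖z‖ := by
          rw [one_mul]
          exact pow_le_of_le_one (norm_nonneg z) hz.le (Nat.succ_ne_zero n)
  have hlt : ‖∑' n : ℕ, t (n + 1)‖ < 1 := lt_of_le_of_lt htail hz
  have hne : ‖t 0‖ ≠ ‖∑' n : ℕ, t (n + 1)‖ := by
    rw [h0]; exact (ne_of_lt hlt).symm
  rw [Summable.tsum_eq_zero_add hsum, IsUltrametricDist.norm_add_eq_max_of_norm_ne_norm hne, h0]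
  exact max_eq_left hlt.le

theorem norm_root_lt_one (hnorm : ∀ x : ℚ_[p], ‖algebraMap ℚ_[p] K x‖ = ‖x‖)
    (hna : ∀ x y : K, ‖x + y‖ ≤ max ‖x‖ ‖y‖)
    {lam : ℕ} {F : Polynomial ℤ_[p]} (hF_monic : F.Monic) (hF_deg : F.natDegree = lam)
    (hF_dist : ∀ i < lam, (p : ℤ_[p]) ∣ F.coeff i)
    {w : K} (hw : (F.map (toK p K)).eval w = 0) : ‖w‖ < 1 := by
  haveI : IsUltrametricDist K :=
    IsUltrametricDist.isUltrametricDist_of_forall_norm_add_le_max_norm hna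
  by_contra hcon
  rw [not_lt] at hcon
  set FK := F.map (toK p K) with hFK
  have hdeg : FK.natDegree = lam := by
    rw [hFK, Polynomial.Monic.natDegree_map hF_monic, hF_deg]
  have heval : (0 : K) = (∑ i ∈ Finset.range lam, FK.coeff i * w ^ i) + FK.coeff lam * w ^ lam := by
    rw [← hw, Polynomial.eval_eq_sum_range, hdeg, Finset.sum_range_succ]
  have hlead : FK.coeff lam = 1 := by
    rw [hFK, Polynomial.coeff_map, ← hF_deg, ← Polynomial.leadingCoeff, hF_monic.leadingCoeff,
      map_one]
  rw [hlead, one_mul] at heval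
  have hkey : ‖w‖ ^ lam ≤ (p : ℝ)⁻¹ * ‖w‖ ^ lam := by
    have hwl : w ^ lam = -(∑ i ∈ Finset.range lam, FK.coeff i * w ^ i) := by
      linear_combination -heval
    have hstep : ‖w‖ ^ lam = ‖∑ i ∈ Finset.range lam, FK.coeff i * w ^ i‖ := by
      rw [← norm_pow, hwl, norm_neg]
    conv_lhs => rw [hstep]
    refine IsUltrametricDist.norm_sum_le_of_forall_le_of_nonneg (by positivity) fun i hi => ?_
    rw [Finset.mem_range] at hi
    rw [norm_mul, norm_pow]
    have h1 : ‖FK.coeff i‖ ≤ (p : ℝ)⁻¹ := by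
      obtain ⟨c, hc'⟩ := hF_dist i hi
      rw [hFK, Polynomial.coeff_map, norm_toK hnorm, hc', norm_mul, PadicInt.norm_p]
      exact mul_le_of_le_one_right (by positivity) (PadicInt.norm_le_one c)
    have h2 : ‖w‖ ^ i ≤ ‖w‖ ^ lam := pow_le_pow_right₀ hcon hi.le
    exact mul_le_mul h1 h2 (by positivity) (by positivity)
  have hp1 : (1 : ℝ) < p := by exact_mod_cast (Fact.out : p.Prime).one_lt
  have hpos : (0 : ℝ) < ‖w‖ ^ lam := by positivity
  have hplt : (p : ℝ)⁻¹ < 1 := by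
    rw [inv_lt_one_iff₀]; right; exact hp1
  exact absurd (lt_of_le_of_lt hkey (mul_lt_of_lt_one_left hpos hplt)) (lt_irrefl _)

theorem norm_multiset_prod_of_forall {c : ℝ} (s : Multiset K) (h : ∀ x ∈ s, ‖x‖ = c) :
    ‖s.prod‖ = c ^ (Multiset.card s) := by
  induction s using Multiset.induction_on with
  | empty => simp
  | cons a t ih =>
      rw [Multiset.prod_cons, norm_mul, h a (Multiset.mem_cons_self a t),
        ih (fun x hx => h x (Multiset.mem_cons_of_mem hx)), Multiset.card_cons, pow_succ]
      ring

end IwasawaAux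

open IwasawaAux


/-- Valuations of values of Iwasawa functions.  Let `K` be a complete algebraically closed
nonarchimedean normed field extending `ℚ_p` isometrically (a model of `ℂ_p`), and write
`v z = -log_p ‖z‖` for its `p`-adic valuation.  Let `f ∈ ℤ_p[[w]]` be nonzero with
Weierstrass factorization `f = p^μ · F · u`, where `F` is a distinguished polynomial of
degree `λ` (monic, lower coefficients divisible by `p`) and `u` a unit of `ℤ_p[[w]]`.
If every zero of `f` in the open unit disc of `K` has valuation at least `r > 0`, then for
every `z` with `0 < v z < r` one has `v (f z) = μ + λ · v z`. -/
theorem valuation_iwasawa_function_eval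
    (p : ℕ) [Fact p.Prime]
    (K : Type*) [NontriviallyNormedField K] [CompleteSpace K] [IsAlgClosed K]
    [Algebra ℚ_[p] K]
    (hnorm : ∀ x : ℚ_[p], ‖algebraMap ℚ_[p] K x‖ = ‖x‖)
    (hna : ∀ x y : K, ‖x + y‖ ≤ max ‖x‖ ‖y‖)
    (f : PowerSeries ℤ_[p]) (hf : f ≠ 0)
    (μ lam : ℕ) (F : Polynomial ℤ_[p]) (u : (PowerSeries ℤ_[p])ˣ)
    (hF_monic : F.Monic) (hF_deg : F.natDegree = lam)
    (hF_dist : ∀ i < lam, (p : ℤ_[p]) ∣ F.coeff i)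
    (hfact : f = (p : PowerSeries ℤ_[p]) ^ μ *
      (PowerSeries.mk fun n => F.coeff n) * (u : PowerSeries ℤ_[p]))
    (r : ℝ) (hr : 0 < r)
    (hroots : ∀ z : K, ‖z‖ < 1 →
      (∑' n : ℕ, algebraMap ℚ_[p] K ((PowerSeries.coeff n f : ℤ_[p]) : ℚ_[p]) * z ^ n)
        = 0 → r ≤ -Real.logb p ‖z‖) :
    ∀ z : K, 0 < -Real.logb p ‖z‖ → -Real.logb p ‖z‖ < r →
      -Real.logb p
          ‖∑' n : ℕ, algebraMap ℚ_[p] K ((PowerSeries.coeff n f : ℤ_[p]) : ℚ_[p]) * z ^ n‖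
        = (μ : ℝ) + (lam : ℝ) * (-Real.logb p ‖z‖) := by
  haveI : IsUltrametricDist K :=
    IsUltrametricDist.isUltrametricDist_of_forall_norm_add_le_max_norm hna
  have hp1 : (1 : ℝ) < p := by exact_mod_cast (Fact.out : p.Prime).one_lt
  -- rephrase the evaluation via `toK`
  have hrepr : ∀ (g : PowerSeries ℤ_[p]) (z : K),
      (∑' n : ℕ, algebraMap ℚ_[p] K ((PowerSeries.coeff n g : ℤ_[p]) : ℚ_[p]) * z ^ n)
        = ∑' n : ℕ, toK p K (PowerSeries.coeff n g) * z ^ n := fun g z => rfl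
  set FK := F.map (toK p K) with hFK
  have hFKmonic : FK.Monic := hF_monic.map _
  have hFKdeg : FK.natDegree = lam := by
    rw [hFK, hF_monic.natDegree_map, hF_deg]
  -- evaluation of f factors
  have heval : ∀ z : K, ‖z‖ < 1 →
      (∑' n : ℕ, toK p K (PowerSeries.coeff n f) * z ^ n)
        = (toK p K (p : ℤ_[p])) ^ μ * FK.eval z
          * (∑' n : ℕ, toK p K (PowerSeries.coeff n (u : PowerSeries ℤ_[p])) * z ^ n) := by
    intro z hz
    rw [hfact, eval_mul hnorm _ _ hz, eval_mul hnorm _ _ hz, eval_pC, eval_poly]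
  -- every root of FK has norm < 1 and valuation ≥ r
  have hroot_lt : ∀ w ∈ FK.roots, ‖w‖ < 1 := fun w hw =>
    norm_root_lt_one hnorm hna hF_monic hF_deg hF_dist
      (Polynomial.isRoot_of_mem_roots hw)
  have hroot_val : ∀ w ∈ FK.roots, r ≤ -Real.logb p ‖w‖ := by
    intro w hw
    refine hroots w (hroot_lt w hw) ?_
    rw [hrepr, heval w (hroot_lt w hw),
      (Polynomial.isRoot_of_mem_roots hw : FK.eval w = 0)]
    ring
  intro z hz1 hz2
  have hz0 : 0 < ‖z‖ := by
    rcases eq_or_lt_of_le (norm_nonneg z) with h | h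
    · exfalso; rw [← h, Real.logb_zero, neg_zero] at hz1; exact lt_irrefl 0 hz1
    · exact h
  have hzlt1 : ‖z‖ < 1 := (Real.logb_neg_iff hp1 hz0).mp (by linarith)
  -- each root has strictly smaller norm than z
  have hwz : ∀ w ∈ FK.roots, ‖w‖ < ‖z‖ := by
    intro w hw
    have h1 := hroot_val w hw
    have hw0 : 0 < ‖w‖ := by
      rcases eq_or_lt_of_le (norm_nonneg w) with h | h
      · exfalso
        rw [← h, Real.logb_zero, neg_zero] at h1
        exact absurd (lt_of_lt_of_le hr h1) (lt_irrefl 0)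
      · exact h
    have : Real.logb p ‖w‖ < Real.logb p ‖z‖ := by linarith
    exact (Real.logb_lt_logb_iff hp1 hw0 hz0).mp this
  -- norm of FK.eval z
  have hFz : ‖FK.eval z‖ = ‖z‖ ^ lam := by
    have hsplit : FK = (FK.roots.map fun a => Polynomial.X - Polynomial.C a).prod :=
      (IsAlgClosed.splits FK).eq_prod_roots_of_monic hFKmonic
    have hcard : Multiset.card FK.roots = lam := by
      rw [← hFKdeg]
      exact (Polynomial.splits_iff_card_roots.mp (IsAlgClosed.splits FK))
    conv_lhs => rw [hsplit]
    rw [Polynomial.eval_multiset_prod, Multiset.map_map]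
    have : ∀ x ∈ FK.roots.map fun a => z - a, ‖x‖ = ‖z‖ := by
      intro x hx
      obtain ⟨w, hw, rfl⟩ := Multiset.mem_map.mp hx
      have hlt := hwz w hw
      have hne : ‖z‖ ≠ ‖-w‖ := by rw [norm_neg]; exact ne_of_gt hlt
      have : z - w = z + -w := by ring
      rw [this, IsUltrametricDist.norm_add_eq_max_of_norm_ne_norm hne, norm_neg]
      exact max_eq_left hlt.le
    have hmapeq : (FK.roots.map fun a => Polynomial.eval z (Polynomial.X - Polynomial.C a))
        = FK.roots.map fun a => z - a := by
      refine Multiset.map_congr rfl fun w _ => ?_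
      simp
    rw [Function.comp_def]
    simp only [Polynomial.eval_sub, Polynomial.eval_X, Polynomial.eval_C]
    rw [norm_multiset_prod_of_forall _ (by simpa using this), Multiset.card_map, hcard]
  -- assemble
  rw [hrepr, heval z hzlt1]
  rw [norm_mul, norm_mul, norm_eval_unit hnorm hna u hzlt1, mul_one, norm_pow,
    norm_toK hnorm, PadicInt.norm_p, hFz]
  have hA : ((p : ℝ)⁻¹) ^ μ ≠ 0 := by positivity
  have hB : ‖z‖ ^ lam ≠ 0 := by positivity
  rw [Real.logb_mul hA hB, Real.logb_pow, Real.logb_pow, Real.logb_inv,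
    Real.logb_self_eq_one hp1]
  ring
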